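/- Let E be a real inner product space and N ≥ 1. For each i = 1,…,N let f_i : E → ℝ be differentiable with L_i-Lipschitz gradient and ρ_i > 0. Suppose for each i: ∇f_i(U_i) = −Y_i, ∇f_i(U_i⁺) + Y_i + ρ_i(U_i⁺ − Z⁺) = 0, and Y_i⁺ = Y_i + ρ_i(U_i⁺ − Z⁺). Then there exists a constant σ₃ > 0, depending only on N and the constants L_i, ρ_i, such that Σ_{i=1}^N ‖U_i⁺ − Z⁺‖² + Σ_{i=1}^N ‖∇f_i(U_i) + Y_i + ρ_i(U_i − Z)‖² ≤ σ₃ (‖Z⁺ − Z‖² + Σ_{i=1}^N ‖U_i⁺ − U_i‖²). -/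
import Mathlib


/-- The squared-quantity bound (35) in the proof of Theorem 3: there is a
constant `σ₃ > 0`, depending only on `N` and the constants `Lᵢ`, `ρᵢ`, such
that for all objectives with `Lᵢ`-Lipschitz gradients and all points
satisfying the ADMM optimality/update conditions,
`Σᵢ ‖Uᵢ⁺ - Z⁺‖² + Σᵢ ‖∇fᵢ(Uᵢ) + Yᵢ + ρᵢ(Uᵢ - Z)‖²
  ≤ σ₃(‖Z⁺ - Z‖² + Σᵢ ‖Uᵢ⁺ - Uᵢ‖²)`. -/
theorem stmt_12 {E : Type*} [NormedAddCommGroup E] [InnerProductSpace ℝ E] [CompleteSpace E]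
    (N : ℕ) (hN : 1 ≤ N)
    (L ρ : Fin N → ℝ) (hL : ∀ i, 0 ≤ L i) (hρ : ∀ i, 0 < ρ i) :
    ∃ σ₃ : ℝ, 0 < σ₃ ∧
      ∀ (f : Fin N → E → ℝ) (f' : Fin N → E → E),
        (∀ i x, HasGradientAt (f i) (f' i x) x) →
        (∀ i x y, ‖f' i x - f' i y‖ ≤ L i * ‖x - y‖) →
        ∀ (U Up : Fin N → E) (Z Zp : E) (Y Yp : Fin N → E),
          (∀ i, f' i (U i) = -(Y i)) →
          (∀ i, f' i (Up i) + Y i + ρ i • (Up i - Zp) = 0) →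
          (∀ i, Yp i = Y i + ρ i • (Up i - Zp)) →
          (∑ i, ‖Up i - Zp‖ ^ 2) + (∑ i, ‖f' i (U i) + Y i + ρ i • (U i - Z)‖ ^ 2) ≤
            σ₃ * (‖Zp - Z‖ ^ 2 + ∑ i, ‖Up i - U i‖ ^ 2) := by
  classical
  set t : Fin N → ℝ := fun i => (L i / ρ i) ^ 2 + 2 * (ρ i + L i) ^ 2 + 2 * (ρ i) ^ 2 with ht
  have htnn : ∀ i, 0 ≤ t i := by intro i; positivity
  set C : ℝ := 1 + ∑ i, t i with hCdef
  have hsumnn : 0 ≤ ∑ i, t i := Finset.sum_nonneg fun i _ => htnn i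
  have hCpos : 0 < C := by linarith
  have htC : ∀ i, t i ≤ C := by
    intro i
    have : t i ≤ ∑ j, t j :=
      Finset.single_le_sum (fun j _ => htnn j) (Finset.mem_univ i)
    linarith
  refine ⟨C, hCpos, ?_⟩
  intro f f' hgrad hlip U Up Z Zp Y Yp hU hUp hYp
  have key : ∀ i, ρ i * ‖Up i - Zp‖ ≤ L i * ‖Up i - U i‖ := by
    intro i
    have hY : Y i = -(f' i (U i)) := by rw [hU i, neg_neg]
    have h1 : ρ i • (Up i - Zp) = f' i (U i) - f' i (Up i) := by
      have h := hUp i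
      rw [hY] at h
      rw [← sub_eq_zero, ← h]; abel
    have h2 : ‖ρ i • (Up i - Zp)‖ = ρ i * ‖Up i - Zp‖ := by
      rw [norm_smul, Real.norm_eq_abs, abs_of_pos (hρ i)]
    calc ρ i * ‖Up i - Zp‖ = ‖f' i (U i) - f' i (Up i)‖ := by rw [← h2, h1]
      _ ≤ L i * ‖U i - Up i‖ := hlip i _ _
      _ = L i * ‖Up i - U i‖ := by rw [norm_sub_rev]
  have hcomb : ∀ i, ‖Up i - Zp‖ ^ 2 + ‖f' i (U i) + Y i + ρ i • (U i - Z)‖ ^ 2 ≤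
      t i * ‖Up i - U i‖ ^ 2 + t i * ‖Zp - Z‖ ^ 2 := by
    intro i
    set a := ‖Up i - Zp‖
    set b := ‖U i - Z‖
    set c := ‖Up i - U i‖
    set d := ‖Zp - Z‖
    have ha0 : 0 ≤ a := norm_nonneg _
    have hb0 : 0 ≤ b := norm_nonneg _
    have hc0 : 0 ≤ c := norm_nonneg _
    have hd0 : 0 ≤ d := norm_nonneg _
    have hz : f' i (U i) + Y i + ρ i • (U i - Z) = ρ i • (U i - Z) := by
      rw [hU i]; abel
    have hz2 : ‖f' i (U i) + Y i + ρ i • (U i - Z)‖ = ρ i * b := by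
      rw [hz, norm_smul, Real.norm_eq_abs, abs_of_pos (hρ i)]
    have ha : a ≤ (L i / ρ i) * c := by
      rw [div_mul_eq_mul_div, le_div_iff₀ (hρ i)]
      calc a * ρ i = ρ i * a := by ring
        _ ≤ L i * c := key i
    have ha2 : a ^ 2 ≤ (L i / ρ i) ^ 2 * c ^ 2 := by
      calc a ^ 2 ≤ ((L i / ρ i) * c) ^ 2 := by
            apply pow_le_pow_left₀ ha0 ha
        _ = (L i / ρ i) ^ 2 * c ^ 2 := by ring
    have htri : b ≤ c + a + d := by
      calc b ≤ ‖U i - Up i‖ + ‖Up i - Z‖ := norm_sub_le_norm_sub_add_norm_sub _ _ _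
        _ ≤ ‖U i - Up i‖ + (‖Up i - Zp‖ + ‖Zp - Z‖) := by
            gcongr; exact norm_sub_le_norm_sub_add_norm_sub _ _ _
        _ = c + a + d := by rw [norm_sub_rev]; ring
    have hb : ρ i * b ≤ (ρ i + L i) * c + ρ i * d := by
      have h := mul_le_mul_of_nonneg_left htri (hρ i).le
      have := key i
      nlinarith
    have hb2 : (ρ i * b) ^ 2 ≤ 2 * (ρ i + L i) ^ 2 * c ^ 2 + 2 * (ρ i) ^ 2 * d ^ 2 := by
      have hnn : 0 ≤ ρ i * b := mul_nonneg (hρ i).le hb0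
      have h1 : (ρ i * b) ^ 2 ≤ ((ρ i + L i) * c + ρ i * d) ^ 2 :=
        pow_le_pow_left₀ hnn hb 2
      nlinarith [sq_nonneg ((ρ i + L i) * c - ρ i * d)]
    rw [hz2, ht]
    simp only
    nlinarith [mul_nonneg (sq_nonneg (ρ i)) (sq_nonneg c),
      mul_nonneg (sq_nonneg (L i / ρ i)) (sq_nonneg d),
      mul_nonneg (sq_nonneg (ρ i + L i)) (sq_nonneg d)]
  calc (∑ i, ‖Up i - Zp‖ ^ 2) + (∑ i, ‖f' i (U i) + Y i + ρ i • (U i - Z)‖ ^ 2)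
      = ∑ i, (‖Up i - Zp‖ ^ 2 + ‖f' i (U i) + Y i + ρ i • (U i - Z)‖ ^ 2) := by
        rw [Finset.sum_add_distrib]
    _ ≤ ∑ i, (t i * ‖Up i - U i‖ ^ 2 + t i * ‖Zp - Z‖ ^ 2) :=
        Finset.sum_le_sum fun i _ => hcomb i
    _ = (∑ i, t i * ‖Up i - U i‖ ^ 2) + (∑ i, t i) * ‖Zp - Z‖ ^ 2 := by
        rw [Finset.sum_add_distrib, Finset.sum_mul]
    _ ≤ C * (‖Zp - Z‖ ^ 2 + ∑ i, ‖Up i - U i‖ ^ 2) := by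
        have h1 : (∑ i, t i * ‖Up i - U i‖ ^ 2) ≤ C * ∑ i, ‖Up i - U i‖ ^ 2 := by
          rw [Finset.mul_sum]
          exact Finset.sum_le_sum fun i _ =>
            mul_le_mul_of_nonneg_right (htC i) (sq_nonneg _)
        have h2 : (∑ i, t i) * ‖Zp - Z‖ ^ 2 ≤ C * ‖Zp - Z‖ ^ 2 :=
          mul_le_mul_of_nonneg_right (by linarith) (sq_nonneg _)
        nlinarith
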